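/- Completely uncorrelated codes (Remark 1, zero-shift part generalized): in the construction of Theorem 1, if s = α^s p^r + δ and t = α^t p^r + δ with the same δ and α^s ≠ α^t, then for every integer shift τ with |τ| < p^{n+r}, the aperiodic cross-correlation sum ∑_{β=0}^{p-1} C_{χ(F_β^s), χ(F_β^t)}(τ) = 0. -/

import Mathlib

/-- `ζ_q^e` for an integer exponent `e`. -/
noncomputable def zeta (q : ℕ) (e : ℤ) : ℂ :=
  Complex.exp (2 * Real.pi * Complex.I * (e : ℂ) / (q : ℂ))

/-- the `i`-th base-`p` digit of `I`, for vectors of length `m`,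
under the identification `I = ∑_{i=0}^{m-1} p^{m-1-i} I_i`. -/
def dgt (p m i I : ℕ) : ℕ := I / p ^ (m - 1 - i) % p

/-- Aperiodic cross-correlation of sequences `a, b` of length `N` at integer shift `τ`. -/
noncomputable def accs (N : ℕ) (a b : ℕ → ℂ) (τ : ℤ) : ℂ :=
  if 0 ≤ τ ∧ τ < (N : ℤ) then
    ∑ i ∈ Finset.range (N - τ.toNat), a (i + τ.toNat) * (starRingEnd ℂ) (b i)
  else if -(N : ℤ) < τ ∧ τ < 0 then
    ∑ i ∈ Finset.range (N - (-τ).toNat), a i * (starRingEnd ℂ) (b (i + (-τ).toNat))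
  else 0

/-- The multi-variable function of Theorem 1 (single Hamiltonian path plus `r` isolated
vertices), evaluated at the integer `I ∈ [0, p^{n+r})` identified with its base-`p`
digit vector: `F_β^{αp^r+δ}(x) = (q/p)∑_{i=1}^{n-1} x_{π(i-1)}x_{π(i)} + ∑ γ_i x_i + θ
+ (q/p)(α x_{π(0)} + β x_{π(n-1)}) + (q/p)·δ·(x_n,…,x_{n+r-1})`. -/
def Fval (p q n r : ℕ) (hn : 2 ≤ n) (π : Equiv.Perm (Fin n)) (γ : Fin n → ℕ) (θ : ℕ)
    (α β δ I : ℕ) : ℤ :=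
  ((q / p : ℕ) : ℤ) *
    (∑ i : Fin n, if h : 1 ≤ (i : ℕ) then
        (dgt p (n + r) (π ⟨(i : ℕ) - 1, by omega⟩) I : ℤ) * (dgt p (n + r) (π i) I : ℤ)
      else 0)
  + ∑ i : Fin n, (γ i : ℤ) * (dgt p (n + r) i I : ℤ) + (θ : ℤ)
  + ((q / p : ℕ) : ℤ) *
      ((α : ℤ) * (dgt p (n + r) (π ⟨0, by omega⟩) I : ℤ) +
       (β : ℤ) * (dgt p (n + r) (π ⟨n - 1, by omega⟩) I : ℤ))
  + ((q / p : ℕ) : ℤ) *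
      ∑ j ∈ Finset.range r, (dgt p r j δ : ℤ) * (dgt p (n + r) (n + j) I : ℤ)

namespace S12
section

lemma zeta_add (q : ℕ) (a b : ℤ) : zeta q (a + b) = zeta q a * zeta q b := by
  rw [zeta, zeta, zeta, ← Complex.exp_add]
  congr 1
  push_cast
  ring

lemma zeta_conj (q : ℕ) (a : ℤ) : (starRingEnd ℂ) (zeta q a) = zeta q (-a) := by
  rw [zeta, zeta, ← Complex.exp_conj]
  congr 1
  simp only [map_div₀, map_mul, Complex.conj_I, Complex.conj_ofReal, map_ofNat,
    Complex.conj_natCast, map_intCast]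
  simp only [Int.cast_neg]
  ring

lemma zeta_zero (q : ℕ) : zeta q 0 = 1 := by simp [zeta]

lemma zeta_scale (p q : ℕ) (hq : 0 < q) (hpq : p ∣ q) (x : ℤ) :
    zeta q (((q / p : ℕ) : ℤ) * x) = zeta p x := by
  rcases Nat.eq_zero_or_pos p with hp | hp
  · subst hp; simp at hpq; omega
  have hqp : (q / p) * p = q := Nat.div_mul_cancel hpq
  have hq0 : (q : ℂ) ≠ 0 := by exact_mod_cast hq.ne'
  have hp0 : (p : ℂ) ≠ 0 := by exact_mod_cast hp.ne'
  rw [zeta, zeta]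
  congr 1
  rw [div_eq_div_iff hq0 hp0]
  have hqc : (q : ℂ) = ((q / p : ℕ) : ℂ) * (p : ℂ) := by exact_mod_cast hqp.symm
  rw [hqc]
  simp only [Int.cast_mul, Int.cast_natCast]
  ring

lemma zeta_geom (p : ℕ) (hp : 2 ≤ p) (e : ℤ) (he : ¬ ((p : ℤ) ∣ e)) :
    ∑ c ∈ Finset.range p, zeta p ((c : ℤ) * e) = 0 := by
  have hp0 : (p : ℂ) ≠ 0 := by
    exact_mod_cast (by omega : p ≠ 0)
  have h2 : (2 * (Real.pi : ℂ) * Complex.I) ≠ 0 := by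
    simp [Real.pi_ne_zero, Complex.I_ne_zero]
  have hpow : ∀ c : ℕ, zeta p ((c : ℤ) * e) = (zeta p e) ^ c := by
    intro c
    rw [zeta, zeta, ← Complex.exp_nat_mul]
    congr 1
    push_cast
    ring
  have hz1 : zeta p e ≠ 1 := by
    intro hz
    rw [zeta, Complex.exp_eq_one_iff] at hz
    obtain ⟨k, hk⟩ := hz
    apply he
    refine ⟨k, ?_⟩
    have hk' : 2 * (Real.pi:ℂ) * Complex.I * (e:ℂ) = (k:ℂ) * (2 * Real.pi * Complex.I) * p :=
      (div_eq_iff hp0).mp hk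
    have h3 : (2*(Real.pi:ℂ)*Complex.I) * (e:ℂ) = (2*(Real.pi:ℂ)*Complex.I) * ((p:ℂ)*k) := by
      linear_combination hk'
    have h4 : (e : ℂ) = (p : ℂ) * k := mul_left_cancel₀ h2 h3
    exact_mod_cast h4
  simp only [hpow]
  rw [geom_sum_eq hz1]
  have hzp : zeta p e ^ p = 1 := by
    rw [← hpow, zeta]
    have : 2 * (Real.pi:ℂ) * Complex.I * (((p:ℤ) * e : ℤ) : ℂ) / p
        = (e : ℂ) * (2 * Real.pi * Complex.I) := by
      push_cast
      field_simp
    rw [this, Complex.exp_int_mul_two_pi_mul_I]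
  rw [hzp]
  simp

end

section

/-- replace the digit of `I` at exponent `e` (i.e. the coefficient of `p^e`) by `c`. -/
def setA (p I e c : ℕ) : ℕ := p ^ (e+1) * (I / p ^ (e+1)) + c * p ^ e + I % p ^ e

variable {p I e e' c c' m : ℕ}

lemma pe_pos (hp : 0 < p) : 0 < p ^ e := Nat.pow_pos hp

lemma decomp (hp : 0 < p) (I e : ℕ) :
    p ^ (e+1) * (I / p ^ (e+1)) + (I / p ^ e % p) * p ^ e + I % p ^ e = I := by
  have h1 : p ^ (e+1) * (I / p ^ (e+1)) + I % p ^ (e+1) = I := Nat.div_add_mod I (p^(e+1))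
  have h2 : I % p ^ (e+1) = (I / p ^ e % p) * p ^ e + I % p ^ e := by
    conv_lhs => rw [pow_succ, Nat.mod_mul]
    ring
  omega

lemma setA_self (hp : 0 < p) : setA p I e (I / p ^ e % p) = I := decomp hp I e

lemma setA_eq (hp : 0 < p) : setA p I e c = (p * (I / p ^ (e+1)) + c) * p ^ e + I % p ^ e := by
  rw [setA, pow_succ]
  ring

lemma setA_div_succ (hp : 0 < p) (hc : c < p) :
    setA p I e c / p ^ (e+1) = I / p ^ (e+1) := by
  have h2 : I % p ^ e < p ^ e := Nat.mod_lt _ (pe_pos hp)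
  have h1 : c * p ^ e + I % p ^ e < p ^ (e+1) := by
    have h3 : (c+1) * p ^ e ≤ p * p ^ e := Nat.mul_le_mul_right _ (by omega)
    have h4 : 0 < p ^ e := pe_pos hp
    calc c * p ^ e + I % p ^ e < (c+1) * p ^ e := by nlinarith
    _ ≤ p * p ^ e := h3
    _ = p ^ (e+1) := by rw [pow_succ]; ring
  rw [setA, add_assoc, Nat.mul_add_div (pe_pos hp), Nat.div_eq_of_lt h1, add_zero]

lemma setA_mod (hp : 0 < p) : setA p I e c % p ^ e = I % p ^ e := by
  rw [setA_eq hp, mul_comm (p * (I / p ^ (e+1)) + c) (p ^ e), Nat.mul_add_mod,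
    Nat.mod_eq_of_lt (Nat.mod_lt _ (pe_pos hp))]

lemma setA_div_self (hp : 0 < p) :
    setA p I e c / p ^ e = p * (I / p ^ (e+1)) + c := by
  rw [setA_eq hp, add_comm ((p * (I / p ^ (e+1)) + c) * p ^ e) (I % p ^ e),
    Nat.add_mul_div_right _ _ (pe_pos hp),
    Nat.div_eq_of_lt (Nat.mod_lt _ (pe_pos hp)), zero_add]

lemma setA_digit_self (hp : 0 < p) (hc : c < p) :
    setA p I e c / p ^ e % p = c := by
  rw [setA_div_self hp, Nat.mul_add_mod, Nat.mod_eq_of_lt hc]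

lemma div_pow_mod_of_mod_eq (hp : 0 < p) (h : e' < e) {X Y : ℕ}
    (hXY : X % p ^ e = Y % p ^ e) : X / p ^ e' % p = Y / p ^ e' % p := by
  have key : ∀ Z : ℕ, Z / p ^ e' % p = (Z % p ^ e) / p ^ e' % p := by
    intro Z
    conv_lhs => rw [← Nat.mod_add_div Z (p ^ e)]
    have hsplit : p ^ e = p ^ e' * p ^ (e - e') := by
      rw [← pow_add]; congr 1; omega
    rw [hsplit, mul_assoc, mul_comm (p ^ e') (p ^ (e - e') * (Z / (p ^ e' * p ^ (e-e')))),
      Nat.add_mul_div_right _ _ (pe_pos hp)]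
    have hsplit2 : p ^ (e - e') = p ^ (e - e' - 1) * p := by
      rw [← pow_succ]; congr 1; omega
    rw [hsplit2, mul_assoc, mul_comm (p ^ (e-e'-1)) (p * _), ← mul_assoc, mul_comm _ p, mul_assoc,
      Nat.add_mul_mod_self_left]
  rw [key X, key Y, hXY]

lemma div_pow_of_div_succ_eq (hp : 0 < p) (h : e < e') {X Y : ℕ}
    (hXY : X / p ^ (e+1) = Y / p ^ (e+1)) : X / p ^ e' % p = Y / p ^ e' % p := by
  have key : ∀ Z : ℕ, Z / p ^ e' = (Z / p ^ (e+1)) / p ^ (e' - (e+1)) := by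
    intro Z
    rw [Nat.div_div_eq_div_mul, ← pow_add]
    congr 2
    omega
  rw [key X, key Y, hXY]

lemma setA_digit_other (hp : 0 < p) (hc : c < p) (hne : e' ≠ e) :
    setA p I e c / p ^ e' % p = I / p ^ e' % p := by
  rcases lt_or_gt_of_ne hne with h | h
  · exact div_pow_mod_of_mod_eq hp h (setA_mod hp)
  · exact div_pow_of_div_succ_eq hp h (setA_div_succ hp hc)

lemma setA_setA (hp : 0 < p) (hc : c < p) :
    setA p (setA p I e c) e c' = setA p I e c' := by
  rw [setA, setA_div_succ hp hc, setA_mod hp, setA]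

lemma setA_lt (hp : 0 < p) (hI : I < p ^ m) (he : e < m) (hc : c < p) :
    setA p I e c < p ^ m := by
  have h2 : I % p ^ e < p ^ e := Nat.mod_lt _ (pe_pos hp)
  have hQ : I / p ^ (e+1) < p ^ (m - (e+1)) := by
    rw [Nat.div_lt_iff_lt_mul (pe_pos hp)]
    have h5 : p ^ (m - (e+1)) * p ^ (e+1) = p ^ m := by rw [← pow_add]; congr 1; omega
    rw [h5]; exact hI
  calc setA p I e c = p ^ (e+1) * (I / p ^ (e+1)) + c * p ^ e + I % p ^ e := rfl
  _ < p ^ (e+1) * (I / p ^ (e+1)) + c * p ^ e + p ^ e := by omega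
  _ = p ^ (e+1) * (I / p ^ (e+1)) + (c + 1) * p ^ e := by ring
  _ ≤ p ^ (e+1) * (I / p ^ (e+1)) + p * p ^ e := by
      have := Nat.mul_le_mul_right (p ^ e) (show c + 1 ≤ p by omega)
      omega
  _ = p ^ (e+1) * (I / p ^ (e+1)) + p ^ (e+1) := by rw [pow_succ]; ring
  _ = p ^ (e+1) * (I / p ^ (e+1) + 1) := by ring
  _ ≤ p ^ (e+1) * p ^ (m - (e+1)) := Nat.mul_le_mul_left _ (by omega)
  _ = p ^ m := by rw [← pow_add]; congr 1; omega

lemma setA_cast (hp : 0 < p) :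
    (setA p I e c : ℤ) = (I : ℤ) + ((c : ℤ) - (I / p ^ e % p : ℕ)) * (p ^ e : ℕ) := by
  have h := decomp hp I e
  rw [setA]
  push_cast
  push_cast at h
  linarith [h]

lemma setA_add (hp : 0 < p) {t J : ℕ} (hJ : J = I + t)
    (hdig : J / p ^ e % p = I / p ^ e % p) :
    setA p J e c = setA p I e c + t := by
  have h1 := setA_cast (p := p) (I := J) (e := e) (c := c) hp
  have h2 := setA_cast (p := p) (I := I) (e := e) (c := c) hp
  have : (setA p J e c : ℤ) = (setA p I e c : ℤ) + t := by
    rw [h1, h2, hdig, hJ]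
    push_cast
    ring
  exact_mod_cast this

/-- digit version -/
lemma dgt_setA (hp : 0 < p) (hc : c < p) {pos k : ℕ} (hpos : pos < m) (hk : k < m) :
    dgt p m k (setA p I (m - 1 - pos) c) = if k = pos then c else dgt p m k I := by
  rw [dgt, dgt]
  by_cases h : k = pos
  · subst h
    rw [if_pos rfl]
    exact setA_digit_self hp hc
  · rw [if_neg h]
    exact setA_digit_other hp hc (by omega)

lemma dgt_lt (hp : 0 < p) (m k I : ℕ) : dgt p m k I < p := Nat.mod_lt _ hp

end

section

def FD (p q n r : ℕ) (hn : 2 ≤ n) (π : Equiv.Perm (Fin n)) (γ : Fin n → ℕ)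
    (θ a β δ : ℕ) (x : ℕ → ℤ) : ℤ :=
  ((q / p : ℕ) : ℤ) *
    (∑ i : Fin n, if h : 1 ≤ (i : ℕ) then
        x (π ⟨(i : ℕ) - 1, by omega⟩) * x (π i)
      else 0)
  + ∑ i : Fin n, (γ i : ℤ) * x i + (θ : ℤ)
  + ((q / p : ℕ) : ℤ) *
      ((a : ℤ) * x (π ⟨0, by omega⟩) + (β : ℤ) * x (π ⟨n - 1, by omega⟩))
  + ((q / p : ℕ) : ℤ) *
      ∑ j ∈ Finset.range r, (dgt p r j δ : ℤ) * x (n + j)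

lemma Fval_eq_FD (p q n r : ℕ) (hn : 2 ≤ n) (π : Equiv.Perm (Fin n)) (γ : Fin n → ℕ)
    (θ a β δ I : ℕ) :
    Fval p q n r hn π γ θ a β δ I
      = FD p q n r hn π γ θ a β δ (fun k => (dgt p (n + r) k I : ℤ)) := rfl

variable {p q n r : ℕ} {hn : 2 ≤ n} {π : Equiv.Perm (Fin n)} {γ : Fin n → ℕ}
  {θ a β δ : ℕ}

lemma FD_congr {x x' : ℕ → ℤ} (h : ∀ k, k < n + r → x k = x' k) :
    FD p q n r hn π γ θ a β δ x = FD p q n r hn π γ θ a β δ x' := by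
  have hπ : ∀ j : Fin n, x ((π j : Fin n) : ℕ) = x' ((π j : Fin n) : ℕ) := by
    intro j
    exact h _ (by have := (π j).isLt; omega)
  rw [FD, FD]
  have h1 : (∑ i : Fin n, if h : 1 ≤ (i : ℕ) then
        x ((π ⟨(i : ℕ) - 1, by omega⟩ : Fin n) : ℕ) * x ((π i : Fin n) : ℕ) else 0)
      = ∑ i : Fin n, if h : 1 ≤ (i : ℕ) then
        x' ((π ⟨(i : ℕ) - 1, by omega⟩ : Fin n) : ℕ) * x' ((π i : Fin n) : ℕ) else 0 := by
    apply Finset.sum_congr rfl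
    intro i _
    by_cases hi : 1 ≤ (i : ℕ)
    · rw [dif_pos hi, dif_pos hi, hπ, hπ]
    · rw [dif_neg hi, dif_neg hi]
  have h2 : (∑ i : Fin n, (γ i : ℤ) * x (i : ℕ)) = ∑ i : Fin n, (γ i : ℤ) * x' (i : ℕ) := by
    apply Finset.sum_congr rfl
    intro i _
    rw [h i (by have := i.isLt; omega)]
  have h4 : (∑ j ∈ Finset.range r, (dgt p r j δ : ℤ) * x (n + j))
      = ∑ j ∈ Finset.range r, (dgt p r j δ : ℤ) * x' (n + j) := by
    apply Finset.sum_congr rfl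
    intro j hj
    rw [h (n + j) (by simp at hj; omega)]
  rw [h1, h2, h4, hπ, hπ]

lemma upd_pi (x : ℕ → ℤ) (c : ℤ) (w j : Fin n) :
    Function.update x ((π w : Fin n) : ℕ) c ((π j : Fin n) : ℕ)
      = if j = w then c else x (π j) := by
  by_cases h : j = w
  · subst h; simp
  · rw [if_neg h, Function.update_of_ne]
    intro hc
    exact h (π.injective (Fin.val_injective hc))

lemma upd_fin (x : ℕ → ℤ) (c : ℤ) (w : Fin n) (i : Fin n) :
    Function.update x ((π w : Fin n) : ℕ) c (i : ℕ)
      = if i = π w then c else x i := by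
  by_cases h : i = π w
  · subst h; simp
  · rw [if_neg h, Function.update_of_ne]
    intro hc
    exact h (Fin.val_injective hc)

end

section
variable {p q n r : ℕ} {hn : 2 ≤ n} {π : Equiv.Perm (Fin n)} {γ : Fin n → ℕ}
  {θ a β δ : ℕ}

/-- quadratic-part sum -/
def Qs (π : Equiv.Perm (Fin n)) (x : ℕ → ℤ) : ℤ :=
  ∑ i : Fin n, if h : 1 ≤ (i : ℕ) then
    x ((π ⟨(i : ℕ) - 1, by omega⟩ : Fin n) : ℕ) * x ((π i : Fin n) : ℕ) else 0

lemma quad_update (x : ℕ → ℤ) (c : ℤ) (w : Fin n) :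
    Qs π (Function.update x ((π w : Fin n) : ℕ) c)
      = Qs π x + (c - x ((π w : Fin n) : ℕ)) *
        ((if h : 1 ≤ (w : ℕ) then
            x ((π ⟨(w : ℕ) - 1, (Nat.sub_le _ _).trans_lt w.isLt⟩ : Fin n) : ℕ) else 0)
         + (if h : (w : ℕ) + 1 < n then x ((π ⟨(w : ℕ) + 1, h⟩ : Fin n) : ℕ) else 0)) := by
  classical
  set pos := ((π w : Fin n) : ℕ) with hposdef
  have key : ∀ i : Fin n,
      (if h : 1 ≤ (i : ℕ) then
        (Function.update x pos c) ((π ⟨(i : ℕ) - 1, by omega⟩ : Fin n) : ℕ)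
          * (Function.update x pos c) ((π i : Fin n) : ℕ) else 0)
      - (if h : 1 ≤ (i : ℕ) then
          x ((π ⟨(i : ℕ) - 1, by omega⟩ : Fin n) : ℕ) * x ((π i : Fin n) : ℕ) else 0)
      = (if i = w then (c - x pos) *
            (if h : 1 ≤ (w : ℕ) then
              x ((π ⟨(w : ℕ) - 1, (Nat.sub_le _ _).trans_lt w.isLt⟩ : Fin n) : ℕ) else 0)
          else 0)
        + (if h : (w : ℕ) + 1 < n then
            (if i = (⟨(w : ℕ) + 1, h⟩ : Fin n) then
              (c - x pos) * x ((π ⟨(w : ℕ) + 1, h⟩ : Fin n) : ℕ) else 0)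
          else 0) := by
    intro i
    by_cases hiw : i = w
    · subst hiw
      have h2 : ¬ (if h : (i : ℕ) + 1 < n then
          (if i = (⟨(i : ℕ) + 1, h⟩ : Fin n) then True else False) else False) := by
        split
        · split
          · next hh hi2 =>
              exfalso
              have := congrArg Fin.val hi2
              simp at this
          · simp
        · simp
      by_cases h1 : 1 ≤ (i : ℕ)
      · rw [dif_pos h1, dif_pos h1, if_pos rfl, dif_pos h1]
        have hne1 : (⟨(i : ℕ) - 1, by omega⟩ : Fin n) ≠ i := by
          intro hh
          have := congrArg Fin.val hh
          simp at this
          omega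
        rw [hposdef, upd_pi, upd_pi, if_pos rfl, if_neg hne1]
        have hz : (if h : (i : ℕ) + 1 < n then
            (if i = (⟨(i : ℕ) + 1, h⟩ : Fin n) then
              (c - x ((π i : Fin n) : ℕ)) * x ((π ⟨(i : ℕ) + 1, h⟩ : Fin n) : ℕ) else 0)
          else 0) = 0 := by
          split
          · next hh =>
              rw [if_neg]
              intro hi2
              have := congrArg Fin.val hi2
              simp at this
          · rfl
        rw [hz]
        have hmk : (⟨(i : ℕ) - 1, (Nat.sub_le _ _).trans_lt i.isLt⟩ : Fin n)
            = (⟨(i : ℕ) - 1, by omega⟩ : Fin n) := rfl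
        rw [hmk]
        ring
      · rw [dif_neg h1, dif_neg h1, if_pos rfl, dif_neg h1]
        have hz : (if h : (i : ℕ) + 1 < n then
            (if i = (⟨(i : ℕ) + 1, h⟩ : Fin n) then
              (c - x pos) * x ((π ⟨(i : ℕ) + 1, h⟩ : Fin n) : ℕ) else 0)
          else 0) = 0 := by
          split
          · next hh =>
              rw [if_neg]
              intro hi2
              have := congrArg Fin.val hi2
              simp at this
          · rfl
        rw [hz]
        ring
    · rw [if_neg hiw]
      by_cases hi2 : (i : ℕ) = (w : ℕ) + 1
      · have h1 : 1 ≤ (i : ℕ) := by omega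
        have hwn : (w : ℕ) + 1 < n := by
          have := i.isLt; omega
        have hieq : i = (⟨(w : ℕ) + 1, hwn⟩ : Fin n) := by
          apply Fin.ext; simpa using hi2
        have hprev : (⟨(i : ℕ) - 1, by omega⟩ : Fin n) = w := by
          apply Fin.ext; simp; omega
        rw [dif_pos h1, dif_pos h1, hprev, hposdef, upd_pi, upd_pi, if_pos rfl,
          if_neg hiw, dif_pos hwn, if_pos hieq]
        have : ((π ⟨(w : ℕ) + 1, hwn⟩ : Fin n) : ℕ) = ((π i : Fin n) : ℕ) := by
          rw [← hieq]
        rw [this]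
        ring
      · -- untouched term
        by_cases h1 : 1 ≤ (i : ℕ)
        · have hprevne : (⟨(i : ℕ) - 1, by omega⟩ : Fin n) ≠ w := by
            intro hh
            have := congrArg Fin.val hh
            simp at this
            omega
          rw [dif_pos h1, dif_pos h1, hposdef, upd_pi, upd_pi, if_neg hiw, if_neg hprevne]
          have hz : (if h : (w : ℕ) + 1 < n then
              (if i = (⟨(w : ℕ) + 1, h⟩ : Fin n) then
                (c - x pos) * x ((π ⟨(w : ℕ) + 1, h⟩ : Fin n) : ℕ) else 0)
            else 0) = 0 := by
            split
            · next hh =>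
                rw [if_neg]
                intro hie
                exact hi2 (by rw [hie])
            · rfl
          rw [hz]
          ring
        · rw [dif_neg h1, dif_neg h1]
          have hz : (if h : (w : ℕ) + 1 < n then
              (if i = (⟨(w : ℕ) + 1, h⟩ : Fin n) then
                (c - x pos) * x ((π ⟨(w : ℕ) + 1, h⟩ : Fin n) : ℕ) else 0)
            else 0) = 0 := by
            split
            · next hh =>
                rw [if_neg]
                intro hie
                exact hi2 (by rw [hie])
            · rfl
          rw [hz]
          ring
  have hsum : Qs π (Function.update x pos c) - Qs π x
      = ∑ i : Fin n, ((if h : 1 ≤ (i : ℕ) then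
        (Function.update x pos c) ((π ⟨(i : ℕ) - 1, by omega⟩ : Fin n) : ℕ)
          * (Function.update x pos c) ((π i : Fin n) : ℕ) else 0)
      - (if h : 1 ≤ (i : ℕ) then
          x ((π ⟨(i : ℕ) - 1, by omega⟩ : Fin n) : ℕ) * x ((π i : Fin n) : ℕ) else 0)) := by
    rw [Finset.sum_sub_distrib]
    rfl
  have hsum2 := Finset.sum_congr rfl (fun i (_ : i ∈ Finset.univ) => key i)
  rw [hsum2] at hsum
  rw [Finset.sum_add_distrib] at hsum
  rw [Finset.sum_ite_eq' Finset.univ w] at hsum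
  have hlast : (∑ i : Fin n, (if h : (w : ℕ) + 1 < n then
            (if i = (⟨(w : ℕ) + 1, h⟩ : Fin n) then
              (c - x pos) * x ((π ⟨(w : ℕ) + 1, h⟩ : Fin n) : ℕ) else 0)
          else 0))
      = (if h : (w : ℕ) + 1 < n then
          (c - x pos) * x ((π ⟨(w : ℕ) + 1, h⟩ : Fin n) : ℕ) else 0) := by
    split
    · next hh =>
        rw [Finset.sum_ite_eq' Finset.univ (⟨(w : ℕ) + 1, hh⟩ : Fin n)]
        simp
    · next hh => simp
  rw [hlast] at hsum
  simp only [Finset.mem_univ, if_pos] at hsum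
  have : Qs π (Function.update x pos c) = Qs π x +
      ((c - x pos) * (if h : 1 ≤ (w : ℕ) then
          x ((π ⟨(w : ℕ) - 1, (Nat.sub_le _ _).trans_lt w.isLt⟩ : Fin n) : ℕ) else 0)
        + (if h : (w : ℕ) + 1 < n then
            (c - x pos) * x ((π ⟨(w : ℕ) + 1, h⟩ : Fin n) : ℕ) else 0)) := by omega
  rw [this]
  congr 1
  by_cases hw2 : (w : ℕ) + 1 < n
  · rw [dif_pos hw2, dif_pos hw2]
    ring
  · rw [dif_neg hw2, dif_neg hw2]
    ring

end

section
variable {p q n r : ℕ} {hn : 2 ≤ n} {π : Equiv.Perm (Fin n)} {γ : Fin n → ℕ}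
  {θ a β δ : ℕ}

lemma lin_update (x : ℕ → ℤ) (c : ℤ) (w : Fin n) :
    (∑ i : Fin n, (γ i : ℤ) * (Function.update x ((π w : Fin n) : ℕ) c) (i : ℕ))
      = (∑ i : Fin n, (γ i : ℤ) * x (i : ℕ))
        + (γ (π w) : ℤ) * (c - x ((π w : Fin n) : ℕ)) := by
  have key : ∀ i : Fin n, (γ i : ℤ) * (Function.update x ((π w : Fin n) : ℕ) c) (i : ℕ)
      - (γ i : ℤ) * x (i : ℕ)
      = if i = π w then (γ (π w) : ℤ) * (c - x ((π w : Fin n) : ℕ)) else 0 := by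
    intro i
    rw [upd_fin]
    by_cases h : i = π w
    · subst h
      rw [if_pos rfl, if_pos rfl]
      ring
    · rw [if_neg h, if_neg h]
      ring
  have hsum : (∑ i : Fin n, (γ i : ℤ) * (Function.update x ((π w : Fin n) : ℕ) c) (i : ℕ))
      - (∑ i : Fin n, (γ i : ℤ) * x (i : ℕ))
      = ∑ i : Fin n, ((γ i : ℤ) * (Function.update x ((π w : Fin n) : ℕ) c) (i : ℕ)
        - (γ i : ℤ) * x (i : ℕ)) := by
    rw [Finset.sum_sub_distrib]
  rw [Finset.sum_congr rfl (fun i (_ : i ∈ Finset.univ) => key i),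
    Finset.sum_ite_eq' Finset.univ (π w)] at hsum
  simp only [Finset.mem_univ, if_pos] at hsum
  linarith [hsum]

lemma del_update (x : ℕ → ℤ) (c : ℤ) (w : Fin n) :
    (∑ j ∈ Finset.range r, (dgt p r j δ : ℤ) * (Function.update x ((π w : Fin n) : ℕ) c) (n + j))
      = ∑ j ∈ Finset.range r, (dgt p r j δ : ℤ) * x (n + j) := by
  apply Finset.sum_congr rfl
  intro j _
  rw [Function.update_of_ne]
  have := (π w).isLt
  omega

lemma ev_def_aux (w : Fin n) : ((w : ℕ) - 1) < n := (Nat.sub_le _ _).trans_lt w.isLt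

/-- master difference lemma -/
lemma alg (a1 a2 : ℕ) (xJ xI : ℕ → ℤ) (c : ℤ) (w : Fin n)
    (hJI : xJ ((π w : Fin n) : ℕ) = xI ((π w : Fin n) : ℕ))
    (hA : ∀ v : Fin n, (w : ℕ) ≤ (v : ℕ) → xJ ((π v : Fin n) : ℕ) = xI ((π v : Fin n) : ℕ)) :
    FD p q n r hn π γ θ a1 β δ (Function.update xJ ((π w : Fin n) : ℕ) c)
      - FD p q n r hn π γ θ a2 β δ (Function.update xI ((π w : Fin n) : ℕ) c)
    = FD p q n r hn π γ θ a1 β δ xJ - FD p q n r hn π γ θ a2 β δ xI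
      + ((q / p : ℕ) : ℤ) * (c - xJ ((π w : Fin n) : ℕ)) *
        (if h : 1 ≤ (w : ℕ) then
            xJ ((π ⟨(w : ℕ) - 1, ev_def_aux w⟩ : Fin n) : ℕ)
              - xI ((π ⟨(w : ℕ) - 1, ev_def_aux w⟩ : Fin n) : ℕ)
          else ((a1 : ℤ) - (a2 : ℤ))) := by
  have h0n : 0 < n := by omega
  have hn1 : n - 1 < n := by omega
  -- endpoints
  have hend0J : (Function.update xJ ((π w : Fin n) : ℕ) c) ((π ⟨0, h0n⟩ : Fin n) : ℕ)
      = if (⟨0, h0n⟩ : Fin n) = w then c else xJ ((π ⟨0, h0n⟩ : Fin n) : ℕ) := upd_pi xJ c w _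
  have hend0I : (Function.update xI ((π w : Fin n) : ℕ) c) ((π ⟨0, h0n⟩ : Fin n) : ℕ)
      = if (⟨0, h0n⟩ : Fin n) = w then c else xI ((π ⟨0, h0n⟩ : Fin n) : ℕ) := upd_pi xI c w _
  have hend1J : (Function.update xJ ((π w : Fin n) : ℕ) c) ((π ⟨n - 1, hn1⟩ : Fin n) : ℕ)
      = if (⟨n - 1, hn1⟩ : Fin n) = w then c else xJ ((π ⟨n - 1, hn1⟩ : Fin n) : ℕ) :=
    upd_pi xJ c w _
  have hend1I : (Function.update xI ((π w : Fin n) : ℕ) c) ((π ⟨n - 1, hn1⟩ : Fin n) : ℕ)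
      = if (⟨n - 1, hn1⟩ : Fin n) = w then c else xI ((π ⟨n - 1, hn1⟩ : Fin n) : ℕ) :=
    upd_pi xI c w _
  have hQJ := quad_update (π := π) xJ c w
  have hQI := quad_update (π := π) xI c w
  have hLJ := lin_update (γ := γ) (π := π) xJ c w
  have hLI := lin_update (γ := γ) (π := π) xI c w
  have hDJ := del_update (p := p) (r := r) (δ := δ) (π := π) xJ c w
  have hDI := del_update (p := p) (r := r) (δ := δ) (π := π) xI c w
  have hFD : ∀ (a' : ℕ) (x : ℕ → ℤ), FD p q n r hn π γ θ a' β δ x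
      = ((q / p : ℕ) : ℤ) * Qs π x
      + ∑ i : Fin n, (γ i : ℤ) * x (i : ℕ) + (θ : ℤ)
      + ((q / p : ℕ) : ℤ) *
          ((a' : ℤ) * x ((π ⟨0, h0n⟩ : Fin n) : ℕ) + (β : ℤ) * x ((π ⟨n - 1, hn1⟩ : Fin n) : ℕ))
      + ((q / p : ℕ) : ℤ) * ∑ j ∈ Finset.range r, (dgt p r j δ : ℤ) * x (n + j) := by
    intro a' x
    rfl
  rw [hFD, hFD, hFD, hFD, hQJ, hQI, hLJ, hLI, hDJ, hDI, hend0J, hend0I, hend1J, hend1I]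
  -- the successor terms agree
  have hsucc : (if h : (w : ℕ) + 1 < n then xJ ((π ⟨(w : ℕ) + 1, h⟩ : Fin n) : ℕ) else 0)
      = (if h : (w : ℕ) + 1 < n then xI ((π ⟨(w : ℕ) + 1, h⟩ : Fin n) : ℕ) else 0) := by
    by_cases h : (w : ℕ) + 1 < n
    · rw [dif_pos h, dif_pos h]
      exact hA ⟨(w : ℕ) + 1, h⟩ (by simp)
    · rw [dif_neg h, dif_neg h]
  by_cases hw0 : 1 ≤ (w : ℕ)
  · -- w ≥ 1 : position π 0 is untouched
    have h0ne : (⟨0, h0n⟩ : Fin n) ≠ w := by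
      intro hh
      have := congrArg Fin.val hh
      simp at this
      omega
    rw [if_neg h0ne, if_neg h0ne, dif_pos hw0, dif_pos hw0, dif_pos hw0]
    rw [hJI, hsucc]
    by_cases hw1 : (⟨n - 1, hn1⟩ : Fin n) = w
    · rw [if_pos hw1, if_pos hw1]
      have : xJ ((π ⟨n - 1, hn1⟩ : Fin n) : ℕ) = xI ((π ⟨n - 1, hn1⟩ : Fin n) : ℕ) := by
        rw [hw1]; exact hJI
      rw [this]
      ring
    · rw [if_neg hw1, if_neg hw1]
      ring
  · -- w = 0 : the α-endpoint is the updated position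
    have h0eq : (⟨0, h0n⟩ : Fin n) = w := by
      apply Fin.ext
      simp
      omega
    subst h0eq
    have h1ne : (⟨n - 1, hn1⟩ : Fin n) ≠ (⟨0, h0n⟩ : Fin n) := by
      intro hh
      have := congrArg Fin.val hh
      simp at this
      omega
    rw [if_pos rfl, if_pos rfl, if_neg h1ne, if_neg h1ne, dif_neg hw0, dif_neg hw0,
      dif_neg hw0]
    have hxn : xJ ((π ⟨n - 1, hn1⟩ : Fin n) : ℕ) = xI ((π ⟨n - 1, hn1⟩ : Fin n) : ℕ) :=
      hA ⟨n - 1, hn1⟩ (by omega)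
    rw [hsucc, hxn, hJI]
    ring

end

section

def pp (n : ℕ) (π : Equiv.Perm (Fin n)) (v : ℕ) : ℕ :=
  if h : v < n then ((π ⟨v, h⟩ : Fin n) : ℕ) else v

lemma pp_lt {n : ℕ} (π : Equiv.Perm (Fin n)) {v : ℕ} (h : v < n) :
    pp n π v = ((π ⟨v, h⟩ : Fin n) : ℕ) := dif_pos h

lemma pp_lt_n {n : ℕ} (π : Equiv.Perm (Fin n)) {v : ℕ} (h : v < n) : pp n π v < n := by
  rw [pp_lt π h]
  exact (π ⟨v, h⟩).isLt

/-- the "pivot" index for the pair `(i+t, i)` : one plus the largest `v < n` at which the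
digit vectors of `i+t` and `i` differ along the path `π`, or `0` if there is none. -/
def wf (p n m t : ℕ) (π : Equiv.Perm (Fin n)) (i : ℕ) : ℕ :=
  Nat.findGreatest
    (fun v => 0 < v ∧ dgt p m (pp n π (v-1)) (i+t) ≠ dgt p m (pp n π (v-1)) i) n

variable {p n m t : ℕ} {π : Equiv.Perm (Fin n)} {i : ℕ}

lemma wf_le : wf p n m t π i ≤ n := Nat.findGreatest_le n

lemma wf_agree (v : ℕ) (hv : wf p n m t π i ≤ v) (hvn : v < n) :
    dgt p m (pp n π v) (i+t) = dgt p m (pp n π v) i := by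
  by_contra hne
  unfold wf at hv
  have hP : 0 < v + 1 ∧ dgt p m (pp n π (v+1-1)) (i+t) ≠ dgt p m (pp n π (v+1-1)) i := by
    constructor
    · omega
    · simpa using hne
  exact (Nat.findGreatest_is_greatest
    (P := fun v => 0 < v ∧ dgt p m (pp n π (v-1)) (i+t) ≠ dgt p m (pp n π (v-1)) i)
    (n := n) (by omega) (by omega)) hP

lemma wf_spec (h : 0 < wf p n m t π i) :
    dgt p m (pp n π (wf p n m t π i - 1)) (i+t) ≠ dgt p m (pp n π (wf p n m t π i - 1)) i := by
  have heq : wf p n m t π i = wf p n m t π i := rfl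
  have := (Nat.findGreatest_eq_iff.mp (heq.symm ▸ rfl : Nat.findGreatest
    (fun v => 0 < v ∧ dgt p m (pp n π (v-1)) (i+t) ≠ dgt p m (pp n π (v-1)) i) n
      = wf p n m t π i)).2.1
  exact (this (by omega)).2

lemma wf_lt (hn : 0 < n)
    (hE : dgt p m (pp n π (n-1)) (i+t) = dgt p m (pp n π (n-1)) i) :
    wf p n m t π i < n := by
  rcases Nat.lt_or_ge (wf p n m t π i) n with h | h
  · exact h
  · exfalso
    have hwn : wf p n m t π i = n := le_antisymm wf_le h
    have := wf_spec (p := p) (m := m) (t := t) (π := π) (i := i) (by omega)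
    rw [hwn] at this
    exact this hE

end

section
variable {p n m t : ℕ} {π : Equiv.Perm (Fin n)} {i : ℕ}

lemma wf_setA (hp : 0 < p) (hnm : n ≤ m) {c : ℕ} (hc : c < p) {w' : ℕ} (hw : w' < n)
    (hag : dgt p m (pp n π w') (i+t) = dgt p m (pp n π w') i)
    (key : setA p (i+t) (m - 1 - pp n π w') c = setA p i (m - 1 - pp n π w') c + t) :
    wf p n m t π (setA p i (m - 1 - pp n π w') c) = wf p n m t π i := by
  set e := m - 1 - pp n π w' with he
  set i' := setA p i e c with hi'
  have hppw : pp n π w' < m := lt_of_lt_of_le (pp_lt_n π hw) hnm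
  have TR : ∀ v, 0 < v → v ≤ n →
      ((0 < v ∧ dgt p m (pp n π (v-1)) (i'+t) ≠ dgt p m (pp n π (v-1)) i')
        ↔ (0 < v ∧ dgt p m (pp n π (v-1)) (i+t) ≠ dgt p m (pp n π (v-1)) i)) := by
    intro v hv0 hvn
    have hv1 : v - 1 < n := by omega
    have hpos' : pp n π (v-1) < m := lt_of_lt_of_le (pp_lt_n π hv1) hnm
    have hd2 : dgt p m (pp n π (v-1)) i'
        = if pp n π (v-1) = pp n π w' then c else dgt p m (pp n π (v-1)) i := by
      rw [hi', he]
      exact dgt_setA hp hc hppw hpos'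
    have hd1 : dgt p m (pp n π (v-1)) (i'+t)
        = if pp n π (v-1) = pp n π w' then c else dgt p m (pp n π (v-1)) (i+t) := by
      rw [hi', ← key, he]
      exact dgt_setA hp hc hppw hpos'
    by_cases hcase : pp n π (v-1) = pp n π w'
    · rw [hd1, hd2, if_pos hcase, if_pos hcase]
      simp only [ne_eq, not_true_eq_false, and_false, false_iff]
      rw [hcase]
      intro hcon
      exact hcon.2 hag
    · rw [hd1, hd2, if_neg hcase, if_neg hcase]
  rw [wf]
  rw [Nat.findGreatest_eq_iff]
  refine ⟨wf_le, ?_, ?_⟩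
  · intro hW0
    rw [TR _ (by omega) (by have := wf_le (p := p) (n := n) (m := m) (t := t) (π := π) (i := i); omega)]
    exact ⟨by omega, wf_spec (by omega)⟩
  · intro v hv hvn
    rw [TR _ (by omega) hvn]
    intro hP
    by_cases hveq : v ≤ n
    · exact (Nat.findGreatest_is_greatest
        (P := fun v => 0 < v ∧ dgt p m (pp n π (v-1)) (i+t) ≠ dgt p m (pp n π (v-1)) i)
        (n := n) (by unfold wf at hv; omega) hvn) hP
    · omega

end


section

/-- `Fval` is affine in `β`. -/
lemma FB (p q n r : ℕ) (hn : 2 ≤ n) (π : Equiv.Perm (Fin n)) (γ : Fin n → ℕ)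
    (θ a β δ I : ℕ) :
    Fval p q n r hn π γ θ a β δ I = Fval p q n r hn π γ θ a 0 δ I
      + ((q / p : ℕ) : ℤ) * (β : ℤ) * (dgt p (n + r) (pp n π (n - 1)) I : ℤ) := by
  rw [pp_lt π (by omega : n - 1 < n)]
  rw [Fval, Fval]
  push_cast
  ring

lemma dvd_zero_of (p : ℕ) (d : ℤ) (hd : (p : ℤ) ∣ d) (h : |d| < p) : d = 0 := by
  rcases hd with ⟨k, rfl⟩
  rw [abs_lt] at h
  rcases lt_trichotomy k 0 with hk | hk | hk
  · have h1 : (p : ℤ) * 1 ≤ (p : ℤ) * (-k) :=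
      mul_le_mul_of_nonneg_left (by omega) (by positivity)
    have h2 : (p : ℤ) * (-k) = -((p : ℤ) * k) := by ring
    omega
  · simp [hk]
  · have : (p : ℤ) * 1 ≤ (p : ℤ) * k :=
      mul_le_mul_of_nonneg_left (by omega) (by positivity)
    omega

/-- the coefficient appearing in the orbit-difference. -/
def EV (p n m t : ℕ) (π : Equiv.Perm (Fin n)) (a1 a2 : ℕ) (b : ℕ) : ℤ :=
  if 1 ≤ wf p n m t π b then
    (dgt p m (pp n π (wf p n m t π b - 1)) (b + t) : ℤ)
      - (dgt p m (pp n π (wf p n m t π b - 1)) b : ℤ)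
  else ((a1 : ℤ) - (a2 : ℤ))

lemma EV_ndvd {p n m t : ℕ} {π : Equiv.Perm (Fin n)} {a1 a2 : ℕ}
    (hp : 2 ≤ p) (ha1 : a1 < p) (ha2 : a2 < p) (hne : a1 ≠ a2) (b : ℕ) :
    ¬ ((p : ℤ) ∣ EV p n m t π a1 a2 b) := by
  have hp0 : 0 < p := by omega
  rw [EV]
  split
  · next hw =>
      intro hdvd
      have h1 := dgt_lt (p := p) hp0 m (pp n π (wf p n m t π b - 1)) (b + t)
      have h2 := dgt_lt (p := p) hp0 m (pp n π (wf p n m t π b - 1)) b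
      have h0 := dvd_zero_of p _ hdvd (by rw [abs_lt]; push_cast; omega)
      have hne' := wf_spec (p := p) (n := n) (m := m) (t := t) (π := π) (i := b)
        (by omega)
      apply hne'
      omega
  · intro hdvd
    have h0 := dvd_zero_of p _ hdvd (by rw [abs_lt]; push_cast; omega)
    apply hne
    omega

/-- stability of the orbit data under digit surgery. -/
lemma stab {p n m t i c : ℕ} {π : Equiv.Perm (Fin n)}
    (hp : 0 < p) (hn0 : 0 < n) (hnm : n ≤ m) (hc : c < p)
    (hiN : i + t < p ^ m)
    (hE : dgt p m (pp n π (n - 1)) (i + t) = dgt p m (pp n π (n - 1)) i) :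
    setA p (i + t) (m - 1 - pp n π (wf p n m t π i)) c
        = setA p i (m - 1 - pp n π (wf p n m t π i)) c + t
    ∧ setA p i (m - 1 - pp n π (wf p n m t π i)) c + t < p ^ m
    ∧ dgt p m (pp n π (n - 1))
        (setA p i (m - 1 - pp n π (wf p n m t π i)) c + t)
        = dgt p m (pp n π (n - 1)) (setA p i (m - 1 - pp n π (wf p n m t π i)) c)
    ∧ wf p n m t π (setA p i (m - 1 - pp n π (wf p n m t π i)) c) = wf p n m t π i := by
  have hw : wf p n m t π i < n := wf_lt hn0 hE
  have hposn : pp n π (wf p n m t π i) < n := pp_lt_n π hw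
  have hposm : pp n π (wf p n m t π i) < m := lt_of_lt_of_le hposn hnm
  have hem : m - 1 - pp n π (wf p n m t π i) < m := by omega
  have hag : dgt p m (pp n π (wf p n m t π i)) (i + t)
      = dgt p m (pp n π (wf p n m t π i)) i := wf_agree _ le_rfl hw
  have hadd : setA p (i + t) (m - 1 - pp n π (wf p n m t π i)) c
      = setA p i (m - 1 - pp n π (wf p n m t π i)) c + t := setA_add hp rfl hag
  have hlt : setA p i (m - 1 - pp n π (wf p n m t π i)) c + t < p ^ m := by
    rw [← hadd]
    exact setA_lt hp hiN hem hc
  have hn1m : pp n π (n - 1) < m := lt_of_lt_of_le (pp_lt_n π (by omega)) hnm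
  have hE' : dgt p m (pp n π (n - 1))
      (setA p i (m - 1 - pp n π (wf p n m t π i)) c + t)
      = dgt p m (pp n π (n - 1)) (setA p i (m - 1 - pp n π (wf p n m t π i)) c) := by
    rw [← hadd, dgt_setA hp hc hposm hn1m, dgt_setA hp hc hposm hn1m]
    by_cases hcase : pp n π (n - 1) = pp n π (wf p n m t π i)
    · rw [if_pos hcase, if_pos hcase]
    · rw [if_neg hcase, if_neg hcase]
      exact hE
  exact ⟨hadd, hlt, hE', wf_setA hp hnm hc hw hag hadd⟩

end


section

lemma diff (p q n r : ℕ) (hp : 0 < p) (hn : 2 ≤ n) (π : Equiv.Perm (Fin n))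
    (γ : Fin n → ℕ) (θ a1 a2 δ : ℕ) {t b c : ℕ} (hc : c < p)
    (hbN : b + t < p ^ (n + r))
    (hE : dgt p (n+r) (pp n π (n-1)) (b+t) = dgt p (n+r) (pp n π (n-1)) b)
    (hb0 : dgt p (n+r) (pp n π (wf p n (n+r) t π b)) b = 0) :
    Fval p q n r hn π γ θ a1 0 δ
        (setA p b (n + r - 1 - pp n π (wf p n (n+r) t π b)) c + t)
      - Fval p q n r hn π γ θ a2 0 δ
        (setA p b (n + r - 1 - pp n π (wf p n (n+r) t π b)) c)
    = (Fval p q n r hn π γ θ a1 0 δ (b+t) - Fval p q n r hn π γ θ a2 0 δ b)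
      + ((q / p : ℕ) : ℤ) * (c : ℤ) * EV p n (n+r) t π a1 a2 b := by
  have hn0 : 0 < n := by omega
  have hnm : n ≤ n + r := Nat.le_add_right n r
  obtain ⟨hadd, hlt, hE', hwf⟩ := stab (π := π) hp hn0 hnm hc hbN hE
  have hw : wf p n (n+r) t π b < n := wf_lt hn0 hE
  have hppW : pp n π (wf p n (n+r) t π b) = ((π ⟨wf p n (n+r) t π b, hw⟩ : Fin n) : ℕ) :=
    pp_lt π hw
  have hposm : pp n π (wf p n (n+r) t π b) < n + r :=
    lt_of_lt_of_le (pp_lt_n π hw) hnm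
  have hag : dgt p (n+r) (pp n π (wf p n (n+r) t π b)) (b+t)
      = dgt p (n+r) (pp n π (wf p n (n+r) t π b)) b := wf_agree _ le_rfl hw
  rw [← hadd, Fval_eq_FD, Fval_eq_FD, Fval_eq_FD, Fval_eq_FD]
  have hxJ : FD p q n r hn π γ θ a1 0 δ
        (fun k => (dgt p (n+r) k (setA p (b+t) (n + r - 1 - pp n π (wf p n (n+r) t π b)) c) : ℤ))
      = FD p q n r hn π γ θ a1 0 δ
        (Function.update (fun k => (dgt p (n+r) k (b+t) : ℤ))
          ((π ⟨wf p n (n+r) t π b, hw⟩ : Fin n) : ℕ) (c : ℤ)) := by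
    apply FD_congr
    intro k hk
    have hds := dgt_setA (p := p) (m := n+r) (I := b+t) (c := c) hp hc
      (pos := pp n π (wf p n (n+r) t π b)) hposm hk
    rw [Function.update_apply, ← hppW, hds]
    by_cases hk2 : k = pp n π (wf p n (n+r) t π b)
    · rw [if_pos hk2, if_pos hk2]
    · rw [if_neg hk2, if_neg hk2]
  have hxI : FD p q n r hn π γ θ a2 0 δ
        (fun k => (dgt p (n+r) k (setA p b (n + r - 1 - pp n π (wf p n (n+r) t π b)) c) : ℤ))
      = FD p q n r hn π γ θ a2 0 δ
        (Function.update (fun k => (dgt p (n+r) k b : ℤ))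
          ((π ⟨wf p n (n+r) t π b, hw⟩ : Fin n) : ℕ) (c : ℤ)) := by
    apply FD_congr
    intro k hk
    have hds := dgt_setA (p := p) (m := n+r) (I := b) (c := c) hp hc
      (pos := pp n π (wf p n (n+r) t π b)) hposm hk
    rw [Function.update_apply, ← hppW, hds]
    by_cases hk2 : k = pp n π (wf p n (n+r) t π b)
    · rw [if_pos hk2, if_pos hk2]
    · rw [if_neg hk2, if_neg hk2]
  rw [hxJ, hxI]
  have hJI : (fun k => (dgt p (n+r) k (b+t) : ℤ)) ((π ⟨wf p n (n+r) t π b, hw⟩ : Fin n) : ℕ)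
      = (fun k => (dgt p (n+r) k b : ℤ)) ((π ⟨wf p n (n+r) t π b, hw⟩ : Fin n) : ℕ) := by
    simp only
    rw [← hppW]
    exact_mod_cast hag
  have hA : ∀ v : Fin n, ((⟨wf p n (n+r) t π b, hw⟩ : Fin n) : ℕ) ≤ (v : ℕ) →
      (fun k => (dgt p (n+r) k (b+t) : ℤ)) ((π v : Fin n) : ℕ)
        = (fun k => (dgt p (n+r) k b : ℤ)) ((π v : Fin n) : ℕ) := by
    intro v hv
    simp only
    have := wf_agree (p := p) (n := n) (m := n+r) (t := t) (π := π) (i := b)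
      (v : ℕ) hv v.isLt
    rw [pp_lt π v.isLt] at this
    exact_mod_cast this
  rw [alg a1 a2 _ _ (c : ℤ) ⟨wf p n (n+r) t π b, hw⟩ hJI hA]
  have hx0 : (dgt p (n+r) ((π ⟨wf p n (n+r) t π b, hw⟩ : Fin n) : ℕ) (b+t) : ℤ) = 0 := by
    rw [← hppW, hag, hb0]
    simp
  rw [hx0]
  rw [EV]
  congr 1
  by_cases hcase : 1 ≤ wf p n (n+r) t π b
  · rw [dif_pos hcase, if_pos hcase]
    have hw1 : wf p n (n+r) t π b - 1 < n := by omega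
    rw [pp_lt π hw1]
    simp only
    ring
  · rw [dif_neg hcase, if_neg hcase]
    ring

end


section

lemma main (p q n r : ℕ) (hp : 2 ≤ p) (hq : 0 < q) (hpq : p ∣ q) (hn : 2 ≤ n)
    (π : Equiv.Perm (Fin n)) (γ : Fin n → ℕ) (θ : ℕ)
    (a1 a2 : ℕ) (ha1 : a1 < p) (ha2 : a2 < p) (hne : a1 ≠ a2) (δ t : ℕ) :
    ∑ β ∈ Finset.range p, ∑ i ∈ Finset.range (p ^ (n + r) - t),
      zeta q (Fval p q n r hn π γ θ a1 β δ (i + t)) *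
        (starRingEnd ℂ) (zeta q (Fval p q n r hn π γ θ a2 β δ i)) = 0 := by
  classical
  have hp0 : 0 < p := by omega
  have hn0 : 0 < n := by omega
  have hnm : n ≤ n + r := Nat.le_add_right n r
  -- step 1 : each term factors
  have hterm : ∀ β i : ℕ,
      zeta q (Fval p q n r hn π γ θ a1 β δ (i + t)) *
        (starRingEnd ℂ) (zeta q (Fval p q n r hn π γ θ a2 β δ i))
      = zeta q (Fval p q n r hn π γ θ a1 0 δ (i + t) - Fval p q n r hn π γ θ a2 0 δ i)
        * zeta p ((β : ℤ) *
            ((dgt p (n+r) (pp n π (n-1)) (i+t) : ℤ) - (dgt p (n+r) (pp n π (n-1)) i : ℤ))) := by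
    intro β i
    rw [zeta_conj, ← zeta_add]
    have harg : Fval p q n r hn π γ θ a1 β δ (i + t)
          + -(Fval p q n r hn π γ θ a2 β δ i)
        = (Fval p q n r hn π γ θ a1 0 δ (i + t) - Fval p q n r hn π γ θ a2 0 δ i)
          + ((q / p : ℕ) : ℤ) * ((β : ℤ) *
            ((dgt p (n+r) (pp n π (n-1)) (i+t) : ℤ) - (dgt p (n+r) (pp n π (n-1)) i : ℤ))) := by
      rw [FB p q n r hn π γ θ a1 β δ (i + t), FB p q n r hn π γ θ a2 β δ i]
      ring
    rw [harg, zeta_add, zeta_scale p q hq hpq]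
  have hsum1 : (∑ β ∈ Finset.range p, ∑ i ∈ Finset.range (p ^ (n + r) - t),
      zeta q (Fval p q n r hn π γ θ a1 β δ (i + t)) *
        (starRingEnd ℂ) (zeta q (Fval p q n r hn π γ θ a2 β δ i)))
      = ∑ i ∈ Finset.range (p ^ (n + r) - t),
          zeta q (Fval p q n r hn π γ θ a1 0 δ (i + t) - Fval p q n r hn π γ θ a2 0 δ i)
          * ∑ β ∈ Finset.range p, zeta p ((β : ℤ) *
            ((dgt p (n+r) (pp n π (n-1)) (i+t) : ℤ) - (dgt p (n+r) (pp n π (n-1)) i : ℤ))) := by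
    rw [Finset.sum_comm]
    apply Finset.sum_congr rfl
    intro i _
    rw [Finset.mul_sum]
    apply Finset.sum_congr rfl
    intro β _
    exact hterm β i
  rw [hsum1]
  have hinner : ∀ i : ℕ,
      (∑ β ∈ Finset.range p, zeta p ((β : ℤ) *
        ((dgt p (n+r) (pp n π (n-1)) (i+t) : ℤ) - (dgt p (n+r) (pp n π (n-1)) i : ℤ))))
      = if dgt p (n+r) (pp n π (n-1)) (i+t) = dgt p (n+r) (pp n π (n-1)) i
          then (p : ℂ) else 0 := by
    intro i
    by_cases h : dgt p (n+r) (pp n π (n-1)) (i+t) = dgt p (n+r) (pp n π (n-1)) i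
    · rw [if_pos h, h]
      simp [sub_self, zeta_zero]
    · rw [if_neg h]
      apply zeta_geom p hp
      intro hdvd
      have h1 := dgt_lt (p := p) hp0 (n+r) (pp n π (n-1)) (i+t)
      have h2 := dgt_lt (p := p) hp0 (n+r) (pp n π (n-1)) i
      have h0 := dvd_zero_of p _ hdvd (by rw [abs_lt]; constructor <;> push_cast <;> omega)
      apply h
      omega
  have hsum2 : (∑ i ∈ Finset.range (p ^ (n + r) - t),
      zeta q (Fval p q n r hn π γ θ a1 0 δ (i + t) - Fval p q n r hn π γ θ a2 0 δ i)
        * ∑ β ∈ Finset.range p, zeta p ((β : ℤ) *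
          ((dgt p (n+r) (pp n π (n-1)) (i+t) : ℤ) - (dgt p (n+r) (pp n π (n-1)) i : ℤ))))
      = ∑ i ∈ Finset.range (p ^ (n + r) - t),
          zeta q (Fval p q n r hn π γ θ a1 0 δ (i + t) - Fval p q n r hn π γ θ a2 0 δ i)
          * (if dgt p (n+r) (pp n π (n-1)) (i+t) = dgt p (n+r) (pp n π (n-1)) i
              then (p : ℂ) else 0) := by
    apply Finset.sum_congr rfl
    intro i _
    rw [hinner i]
  rw [hsum2]
  rw [← Finset.sum_filter_add_sum_filter_not (Finset.range (p ^ (n+r) - t))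
    (fun i => dgt p (n+r) (pp n π (n-1)) (i+t) = dgt p (n+r) (pp n π (n-1)) i)]
  have hnotE : (∑ i ∈ (Finset.range (p ^ (n+r) - t)).filter
      (fun i => ¬ (dgt p (n+r) (pp n π (n-1)) (i+t) = dgt p (n+r) (pp n π (n-1)) i)),
      zeta q (Fval p q n r hn π γ θ a1 0 δ (i + t) - Fval p q n r hn π γ θ a2 0 δ i)
        * (if dgt p (n+r) (pp n π (n-1)) (i+t) = dgt p (n+r) (pp n π (n-1)) i
            then (p : ℂ) else 0)) = 0 := by
    apply Finset.sum_eq_zero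
    intro i hi
    rw [if_neg (Finset.mem_filter.mp hi).2, mul_zero]
  rw [hnotE, add_zero]
  have hEpart : (∑ i ∈ (Finset.range (p ^ (n+r) - t)).filter
      (fun i => dgt p (n+r) (pp n π (n-1)) (i+t) = dgt p (n+r) (pp n π (n-1)) i),
      zeta q (Fval p q n r hn π γ θ a1 0 δ (i + t) - Fval p q n r hn π γ θ a2 0 δ i)
        * (if dgt p (n+r) (pp n π (n-1)) (i+t) = dgt p (n+r) (pp n π (n-1)) i
            then (p : ℂ) else 0))
      = (∑ i ∈ (Finset.range (p ^ (n+r) - t)).filter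
          (fun i => dgt p (n+r) (pp n π (n-1)) (i+t) = dgt p (n+r) (pp n π (n-1)) i),
          zeta q (Fval p q n r hn π γ θ a1 0 δ (i + t) - Fval p q n r hn π γ θ a2 0 δ i))
        * (p : ℂ) := by
    rw [Finset.sum_mul]
    apply Finset.sum_congr rfl
    intro i hi
    rw [if_pos (Finset.mem_filter.mp hi).2]
  rw [hEpart]
  suffices hSE : (∑ i ∈ (Finset.range (p ^ (n+r) - t)).filter
      (fun i => dgt p (n+r) (pp n π (n-1)) (i+t) = dgt p (n+r) (pp n π (n-1)) i),
      zeta q (Fval p q n r hn π γ θ a1 0 δ (i + t) - Fval p q n r hn π γ θ a2 0 δ i)) = 0 by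
    rw [hSE, zero_mul]
  -- the fibre bijection
  set T := (Finset.range (p ^ (n+r) - t)).filter
      (fun i => dgt p (n+r) (pp n π (n-1)) (i+t) = dgt p (n+r) (pp n π (n-1)) i) with hT
  set A := T.filter (fun b => dgt p (n+r) (pp n π (wf p n (n+r) t π b)) b = 0) with hA
  have hmemT : ∀ i : ℕ, i ∈ T ↔ (i + t < p ^ (n+r) ∧
      dgt p (n+r) (pp n π (n-1)) (i+t) = dgt p (n+r) (pp n π (n-1)) i) := by
    intro i
    rw [hT, Finset.mem_filter, Finset.mem_range]
    constructor
    · rintro ⟨h1, h2⟩; exact ⟨by omega, h2⟩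
    · rintro ⟨h1, h2⟩; exact ⟨by omega, h2⟩
  -- stability consequences
  have hstab : ∀ i ∈ T, ∀ c : ℕ, c < p →
      (setA p i (n + r - 1 - pp n π (wf p n (n+r) t π i)) c ∈ T
      ∧ wf p n (n+r) t π (setA p i (n + r - 1 - pp n π (wf p n (n+r) t π i)) c)
          = wf p n (n+r) t π i) := by
    intro i hi c hc
    obtain ⟨hiN, hE⟩ := (hmemT i).mp hi
    obtain ⟨hadd, hlt, hE', hwf⟩ := stab (π := π) hp0 hn0 hnm hc hiN hE
    refine ⟨(hmemT _).mpr ⟨hlt, hE'⟩, hwf⟩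
  have hdgt0 : ∀ i ∈ T, ∀ c : ℕ, c < p →
      dgt p (n+r) (pp n π (wf p n (n+r) t π i))
        (setA p i (n + r - 1 - pp n π (wf p n (n+r) t π i)) c) = c := by
    intro i hi c hc
    obtain ⟨hiN, hE⟩ := (hmemT i).mp hi
    have hw : wf p n (n+r) t π i < n := wf_lt hn0 hE
    have hposm : pp n π (wf p n (n+r) t π i) < n + r := lt_of_lt_of_le (pp_lt_n π hw) hnm
    rw [dgt_setA hp0 hc hposm hposm, if_pos rfl]
  -- the bijection
  have hbij := Finset.sum_nbij'
    (i := fun i0 => ((setA p i0 (n + r - 1 - pp n π (wf p n (n+r) t π i0)) 0,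
        dgt p (n+r) (pp n π (wf p n (n+r) t π i0)) i0) : ℕ × ℕ))
    (j := fun x => setA p x.1 (n + r - 1 - pp n π (wf p n (n+r) t π x.1)) x.2)
    (s := T) (t := A ×ˢ Finset.range p)
    (f := fun i0 => zeta q (Fval p q n r hn π γ θ a1 0 δ (i0 + t)
        - Fval p q n r hn π γ θ a2 0 δ i0))
    (g := fun x => zeta q ((Fval p q n r hn π γ θ a1 0 δ (x.1 + t)
        - Fval p q n r hn π γ θ a2 0 δ x.1)
        + ((q / p : ℕ) : ℤ) * (x.2 : ℤ) * EV p n (n+r) t π a1 a2 x.1))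
    ?_ ?_ ?_ ?_ ?_
  · rw [hbij, Finset.sum_product]
    apply Finset.sum_eq_zero
    intro b hb
    have hterm2 : ∀ c : ℕ,
        zeta q ((Fval p q n r hn π γ θ a1 0 δ (b + t) - Fval p q n r hn π γ θ a2 0 δ b)
          + ((q / p : ℕ) : ℤ) * (c : ℤ) * EV p n (n+r) t π a1 a2 b)
        = zeta q (Fval p q n r hn π γ θ a1 0 δ (b + t) - Fval p q n r hn π γ θ a2 0 δ b)
          * zeta p ((c : ℤ) * EV p n (n+r) t π a1 a2 b) := by
      intro c
      rw [zeta_add]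
      congr 1
      rw [mul_assoc, zeta_scale p q hq hpq]
    calc (∑ c ∈ Finset.range p,
        zeta q ((Fval p q n r hn π γ θ a1 0 δ (b + t) - Fval p q n r hn π γ θ a2 0 δ b)
          + ((q / p : ℕ) : ℤ) * (c : ℤ) * EV p n (n+r) t π a1 a2 b))
        = ∑ c ∈ Finset.range p,
          zeta q (Fval p q n r hn π γ θ a1 0 δ (b + t) - Fval p q n r hn π γ θ a2 0 δ b)
          * zeta p ((c : ℤ) * EV p n (n+r) t π a1 a2 b) :=
        Finset.sum_congr rfl (fun c _ => hterm2 c)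
      _ = zeta q (Fval p q n r hn π γ θ a1 0 δ (b + t) - Fval p q n r hn π γ θ a2 0 δ b)
          * ∑ c ∈ Finset.range p, zeta p ((c : ℤ) * EV p n (n+r) t π a1 a2 b) := by
        rw [Finset.mul_sum]
      _ = 0 := by
        rw [zeta_geom p hp _ (EV_ndvd hp ha1 ha2 hne b), mul_zero]
  · -- forward map lands in A ×ˢ range p
    intro i0 hi0
    rw [Finset.mem_product]
    constructor
    · rw [hA, Finset.mem_filter]
      obtain ⟨hmem, hwf⟩ := hstab i0 hi0 0 hp0
      refine ⟨hmem, ?_⟩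
      rw [hwf]
      exact hdgt0 i0 hi0 0 hp0
    · rw [Finset.mem_range]
      exact dgt_lt hp0 _ _ _
  · -- backward map lands in T
    rintro ⟨b, c⟩ hx
    rw [Finset.mem_product] at hx
    obtain ⟨hbA, hc⟩ := hx
    rw [hA, Finset.mem_filter] at hbA
    exact (hstab b hbA.1 c (Finset.mem_range.mp hc)).1
  · -- left inverse
    intro i0 hi0
    simp only
    obtain ⟨hmem, hwf⟩ := hstab i0 hi0 0 hp0
    rw [hwf]
    rw [setA_setA hp0 hp0]
    exact setA_self hp0
  · -- right inverse
    rintro ⟨b, c⟩ hx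
    rw [Finset.mem_product] at hx
    obtain ⟨hbA, hcmem⟩ := hx
    have hc : c < p := Finset.mem_range.mp hcmem
    rw [hA, Finset.mem_filter] at hbA
    obtain ⟨hbT, hb0⟩ := hbA
    obtain ⟨hmem', hwf'⟩ := hstab b hbT c hc
    simp only
    rw [hwf']
    have h1 : setA p (setA p b (n + r - 1 - pp n π (wf p n (n+r) t π b)) c)
        (n + r - 1 - pp n π (wf p n (n+r) t π b)) 0
        = setA p b (n + r - 1 - pp n π (wf p n (n+r) t π b)) 0 := setA_setA hp0 hc
    have h2 : setA p b (n + r - 1 - pp n π (wf p n (n+r) t π b)) 0 = b := by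
      conv_lhs => rw [← hb0]
      exact setA_self hp0
    have h3 := hdgt0 b hbT c hc
    rw [h1, h2, h3]
  · -- values agree
    intro i0 hi0
    simp only
    obtain ⟨hiN, hE⟩ := (hmemT i0).mp hi0
    obtain ⟨hadd, hlt, hE', hwf⟩ := stab (π := π) hp0 hn0 hnm hp0 hiN hE
    obtain ⟨hmem, _⟩ := hstab i0 hi0 0 hp0
    have hb0 : dgt p (n+r) (pp n π (wf p n (n+r) t π
        (setA p i0 (n + r - 1 - pp n π (wf p n (n+r) t π i0)) 0)))
        (setA p i0 (n + r - 1 - pp n π (wf p n (n+r) t π i0)) 0) = 0 := by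
      rw [hwf]
      exact hdgt0 i0 hi0 0 hp0
    have hd := diff p q n r hp0 hn π γ θ a1 a2 δ
      (c := dgt p (n+r) (pp n π (wf p n (n+r) t π i0)) i0)
      (b := setA p i0 (n + r - 1 - pp n π (wf p n (n+r) t π i0)) 0)
      (dgt_lt hp0 _ _ _) hlt hE' hb0
    rw [hwf] at hd
    have hback : setA p (setA p i0 (n + r - 1 - pp n π (wf p n (n+r) t π i0)) 0)
        (n + r - 1 - pp n π (wf p n (n+r) t π i0))
        (dgt p (n+r) (pp n π (wf p n (n+r) t π i0)) i0) = i0 := by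
      rw [setA_setA hp0 hp0]
      exact setA_self hp0
    rw [hback] at hd
    rw [← hd]

end

end S12

/-- Completely uncorrelated codes (Remark 1 generalized): in the construction of
Theorem 1, if `s = α^s p^r + δ` and `t = α^t p^r + δ` share the same `δ` and
`α^s ≠ α^t`, then for every shift `τ` with `|τ| < p^{n+r}` the aperiodic
cross-correlation sum `∑_{β<p} C_{χ(F_β^s), χ(F_β^t)}(τ)` vanishes. -/
theorem stmt_12 (p q n r : ℕ) (hp : 2 ≤ p) (hq : 0 < q) (hpq : p ∣ q) (hn : 2 ≤ n)
    (π : Equiv.Perm (Fin n)) (γ : Fin n → ℕ) (hγ : ∀ i, γ i < p) (θ : ℕ) (hθ : θ < q)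
    (αs αt : ℕ) (hαs : αs < p) (hαt : αt < p) (hne : αs ≠ αt)
    (δ : ℕ) (hδ : δ < p ^ r) (τ : ℤ) (hτ : |τ| < (p ^ (n + r) : ℤ)) :
    ∑ β ∈ Finset.range p,
      accs (p ^ (n + r))
        (fun I => zeta q (Fval p q n r hn π γ θ αs β δ I))
        (fun I => zeta q (Fval p q n r hn π γ θ αt β δ I)) τ = 0 := by
  have habs := abs_lt.mp hτ
  rcases le_or_gt 0 τ with hsgn | hsgn
  · -- τ ≥ 0
    have hcond : 0 ≤ τ ∧ τ < ((p ^ (n + r) : ℕ) : ℤ) := by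
      constructor
      · exact hsgn
      · push_cast
        exact habs.2
    have haccs : ∀ a b : ℕ → ℂ, accs (p ^ (n + r)) a b τ =
        ∑ i ∈ Finset.range (p ^ (n + r) - τ.toNat),
          a (i + τ.toNat) * (starRingEnd ℂ) (b i) := by
      intro a b
      rw [accs, if_pos hcond]
    simp only [haccs]
    exact S12.main p q n r hp hq hpq hn π γ θ αs αt hαs hαt hne δ τ.toNat
  · -- τ < 0
    have hcond1 : ¬ (0 ≤ τ ∧ τ < ((p ^ (n + r) : ℕ) : ℤ)) := by
      intro hcontra
      omega
    have hcond2 : -((p ^ (n + r) : ℕ) : ℤ) < τ ∧ τ < 0 := by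
      constructor
      · push_cast
        exact habs.1
      · exact hsgn
    have haccs : ∀ a b : ℕ → ℂ, accs (p ^ (n + r)) a b τ =
        ∑ i ∈ Finset.range (p ^ (n + r) - (-τ).toNat),
          a i * (starRingEnd ℂ) (b (i + (-τ).toNat)) := by
      intro a b
      rw [accs, if_neg hcond1, if_pos hcond2]
    simp only [haccs]
    have hmain := S12.main p q n r hp hq hpq hn π γ θ αt αs hαt hαs
      (Ne.symm hne) δ (-τ).toNat
    calc (∑ β ∈ Finset.range p, ∑ i ∈ Finset.range (p ^ (n + r) - (-τ).toNat),
          zeta q (Fval p q n r hn π γ θ αs β δ i) *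
            (starRingEnd ℂ) (zeta q (Fval p q n r hn π γ θ αt β δ (i + (-τ).toNat))))
        = (starRingEnd ℂ) (∑ β ∈ Finset.range p,
            ∑ i ∈ Finset.range (p ^ (n + r) - (-τ).toNat),
            zeta q (Fval p q n r hn π γ θ αt β δ (i + (-τ).toNat)) *
              (starRingEnd ℂ) (zeta q (Fval p q n r hn π γ θ αs β δ i))) := by
          rw [map_sum]
          apply Finset.sum_congr rfl
          intro β _
          rw [map_sum]
          apply Finset.sum_congr rfl
          intro i _
          rw [map_mul, Complex.conj_conj]
          ring
      _ = 0 := by rw [hmain, map_zero]
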